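/- Let n ≥ 1 be an integer and let f be holomorphic on the unit polydisk 𝔻ⁿ with |f(z)| ≤ 1 for all z ∈ 𝔻ⁿ. Then for all z ∈ 𝔻ⁿ the Euler derivative satisfies |Df(z)| ≤ n‖z‖_∞·(1 − |f(z)|²)/(1 − ‖z‖_∞²). -/

import Mathlib

open Finset

open Metric Filter


lemma mobius_normSq (a w : ℂ) :
    Complex.normSq (1 - (starRingEnd ℂ) a * w) - Complex.normSq (a - w)
      = (1 - Complex.normSq a) * (1 - Complex.normSq w) := by
  simp only [Complex.normSq_apply, Complex.mul_re, Complex.mul_im, Complex.sub_re,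
    Complex.sub_im, Complex.conj_re, Complex.conj_im, Complex.one_re, Complex.one_im]
  ring

lemma mobius_lt {a w : ℂ} (ha : ‖a‖ < 1) (hw : ‖w‖ < 1) :
    ‖a - w‖ < ‖1 - (starRingEnd ℂ) a * w‖ := by
  have h := mobius_normSq a w
  have ha' : Complex.normSq a < 1 := by
    rw [← Complex.sq_norm]
    nlinarith [norm_nonneg a, ha]
  have hw' : Complex.normSq w < 1 := by
    rw [← Complex.sq_norm]
    nlinarith [norm_nonneg w, hw]
  have h2 : Complex.normSq (a - w) < Complex.normSq (1 - (starRingEnd ℂ) a * w) := by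
    nlinarith
  have := Real.sqrt_lt_sqrt (Complex.normSq_nonneg _) h2
  rw [Complex.norm_def, Complex.norm_def]; exact this

lemma mobius_den_ne {a w : ℂ} (ha : ‖a‖ < 1) (hw : ‖w‖ < 1) :
    1 - (starRingEnd ℂ) a * w ≠ 0 := by
  intro h
  have := mobius_lt ha hw
  rw [h, norm_zero] at this
  exact absurd this (not_lt.mpr (norm_nonneg _))

lemma schwarz_pick_key {m : ℝ} (hm0 : 0 < m) (hm1 : m < 1)
    {φ : ℂ → ℂ} (hφ : DifferentiableOn ℂ φ (ball 0 (1/m)))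
    (hφb : ∀ w ∈ ball (0:ℂ) (1/m), ‖φ w‖ < 1) :
    ‖deriv φ 1‖ ≤ m * (1 - ‖φ 1‖ ^ 2) / (1 - m ^ 2) := by
  have hR : (1:ℝ) < 1/m := by rw [lt_div_iff₀ hm0]; linarith
  have h1mem : (1:ℂ) ∈ ball (0:ℂ) (1/m) := by
    simp only [mem_ball, dist_zero_right, norm_one]; exact hR
  have hopen : IsOpen (ball (0:ℂ) (1/m)) := isOpen_ball
  set b := φ 1 with hbdef
  have hb1 : ‖b‖ < 1 := hφb 1 h1mem
  have hmC : ((m:ℂ)) ≠ 0 := by exact_mod_cast hm0.ne'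
  -- σ maps unit ball into ball 0 (1/m), σ 0 = 1
  set σ : ℂ → ℂ := fun w => ((m:ℂ) + w) / ((m:ℂ) * (1 + (m:ℂ) * w)) with hσdef
  have hmnorm : ‖(m:ℂ)‖ = m := by rw [Complex.norm_real, Real.norm_of_nonneg hm0.le]
  have hA : ∀ w : ℂ, ‖w‖ < 1 → ‖(m:ℂ) + w‖ < ‖1 + (m:ℂ) * w‖ := by
    intro w hw
    have hm1' : ‖(-(m:ℂ))‖ < 1 := by rwa [norm_neg, hmnorm]
    have h := mobius_lt hm1' hw
    rw [map_neg, Complex.conj_ofReal, show (-(m:ℂ) - w) = -((m:ℂ) + w) by ring, norm_neg,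
      show (1 - -(m:ℂ) * w) = 1 + (m:ℂ) * w by ring] at h
    exact h
  have hden1 : ∀ w : ℂ, ‖w‖ < 1 → (1 + (m:ℂ) * w) ≠ 0 := by
    intro w hw h
    have := hA w hw
    rw [h, norm_zero] at this
    exact absurd this (not_lt.mpr (norm_nonneg _))
  have hσmem : ∀ w : ℂ, ‖w‖ < 1 → σ w ∈ ball (0:ℂ) (1/m) := by
    intro w hw
    have h1 := hA w hw
    have hpos : 0 < ‖1 + (m:ℂ) * w‖ := lt_of_le_of_lt (norm_nonneg _) h1
    simp only [hσdef, mem_ball, dist_zero_right, norm_div, norm_mul, hmnorm]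
    rw [div_lt_div_iff₀ (by positivity) hm0]
    calc ‖(m:ℂ) + w‖ * m < ‖1 + (m:ℂ)*w‖ * m := by nlinarith
      _ = 1 * (m * ‖1 + (m:ℂ)*w‖) := by ring
  have hσ0 : σ 0 = 1 := by
    simp only [hσdef]
    field_simp
    simp
  -- ψ
  set ψ : ℂ → ℂ := fun w => (b - φ (σ w)) / (1 - (starRingEnd ℂ) b * φ (σ w)) with hψdef
  have hψ0 : ψ 0 = 0 := by
    simp [hψdef, hσ0]
    exact Or.inl (by rw [hbdef, sub_self])
  have hσdiff : ∀ w : ℂ, ‖w‖ < 1 → DifferentiableAt ℂ σ w := by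
    intro w hw
    apply DifferentiableAt.div
    · fun_prop
    · fun_prop
    · exact mul_ne_zero hmC (hden1 w hw)
  have hφσ : ∀ w : ℂ, ‖w‖ < 1 → DifferentiableAt ℂ (fun v => φ (σ v)) w := by
    intro w hw
    exact ((hφ.differentiableAt (hopen.mem_nhds (hσmem w hw))).comp w (hσdiff w hw))
  have hψdiff : DifferentiableOn ℂ ψ (ball 0 1) := by
    intro w hw
    rw [mem_ball, dist_zero_right] at hw
    have h1 := hφσ w hw
    have hne : 1 - (starRingEnd ℂ) b * φ (σ w) ≠ 0 :=
      mobius_den_ne hb1 (hφb _ (hσmem w hw))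
    exact (((differentiableAt_const b).sub h1).div
      ((differentiableAt_const 1).sub ((differentiableAt_const _).mul h1)) hne).differentiableWithinAt
  have hψmaps : Set.MapsTo ψ (ball 0 1) (ball (ψ 0) 1) := by
    intro w hw
    rw [mem_ball, dist_zero_right] at hw
    have hv : ‖φ (σ w)‖ < 1 := hφb _ (hσmem w hw)
    have := mobius_lt hb1 hv
    have hpos : 0 < ‖1 - (starRingEnd ℂ) b * φ (σ w)‖ := lt_of_le_of_lt (norm_nonneg _) this
    rw [hψ0, mem_ball, dist_zero_right]
    simp only [hψdef, norm_div]
    rw [div_lt_one hpos]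
    exact this
  have hschwarz := Complex.norm_deriv_le_div_of_mapsTo_ball hψdiff (hψmaps.mono_right ball_subset_closedBall) one_pos
  -- compute deriv ψ 0
  have hσ0d : HasDerivAt σ ((1 * ((m:ℂ) * (1 + (m:ℂ) * 0)) - ((m:ℂ) + 0) * ((m:ℂ) * (m:ℂ))) / ((m:ℂ) * (1 + (m:ℂ) * 0)) ^ 2) 0 := by
    apply HasDerivAt.div
    · simpa using (hasDerivAt_id (0:ℂ)).const_add (m:ℂ)
    · have : HasDerivAt (fun w : ℂ => 1 + (m:ℂ) * w) ((m:ℂ)) 0 := by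
        simpa using ((hasDerivAt_id (0:ℂ)).const_mul (m:ℂ)).const_add 1
      simpa [mul_comm] using this.const_mul (m:ℂ)
    · exact mul_ne_zero hmC (hden1 0 (by norm_num))
  have hDσ : HasDerivAt σ ((((1 - m^2)/m : ℝ)):ℂ) 0 := by
    convert hσ0d using 1
    push_cast
    field_simp
    ring
  have hφ1d' : HasDerivAt φ (deriv φ 1) (σ 0) := by
    rw [hσ0]; exact (hφ.differentiableAt (hopen.mem_nhds h1mem)).hasDerivAt
  set u' : ℂ := deriv φ 1 * ((((1 - m^2)/m : ℝ)):ℂ) with hu'def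
  have hu : HasDerivAt (fun w => φ (σ w)) u' 0 := hφ1d'.comp 0 hDσ
  have hb0 : φ (σ 0) = b := by rw [hσ0]
  have hdenb : (1 : ℂ) - (starRingEnd ℂ) b * b ≠ 0 := mobius_den_ne hb1 hb1
  have hnum : HasDerivAt (fun w => b - φ (σ w)) (-u') 0 := hu.const_sub b
  have hden : HasDerivAt (fun w => 1 - (starRingEnd ℂ) b * φ (σ w))
      (-((starRingEnd ℂ) b * u')) 0 := (hu.const_mul ((starRingEnd ℂ) b)).const_sub 1
  have hψd0 : HasDerivAt ψ ((-u' * (1 - (starRingEnd ℂ) b * φ (σ 0))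
      - (b - φ (σ 0)) * (-((starRingEnd ℂ) b * u'))) / (1 - (starRingEnd ℂ) b * φ (σ 0))^2) 0 :=
    hnum.div hden (by rw [hb0]; exact hdenb)
  have hderiv : deriv ψ 0 = -u' / (1 - (starRingEnd ℂ) b * b) := by
    rw [hψd0.deriv, hb0]
    field_simp
    ring
  have hmulconj : (starRingEnd ℂ) b * b = (Complex.normSq b : ℂ) := by
    rw [mul_comm, Complex.mul_conj]
  have hns : Complex.normSq b = ‖b‖^2 := by rw [← Complex.sq_norm]
  have hlt : ‖b‖^2 < 1 := by nlinarith [norm_nonneg b]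
  have hval : ‖deriv ψ 0‖ = ‖u'‖ / (1 - ‖b‖^2) := by
    rw [hderiv, norm_div, norm_neg, hmulconj,
      show (1:ℂ) - ((Complex.normSq b : ℝ):ℂ) = ((1 - Complex.normSq b : ℝ):ℂ) by push_cast; ring,
      Complex.norm_real, Real.norm_of_nonneg (by nlinarith [hns]), hns]
  have hu'norm : ‖u'‖ = ‖deriv φ 1‖ * ((1 - m^2)/m) := by
    rw [hu'def, norm_mul, Complex.norm_real, Real.norm_of_nonneg
      (div_nonneg (by nlinarith) hm0.le)]
  have hkey : ‖deriv φ 1‖ * ((1 - m^2)/m) ≤ 1 - ‖b‖^2 := by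
    have h1 : ‖deriv ψ 0‖ ≤ 1 := by simpa using hschwarz
    rw [hval, div_le_one (by nlinarith)] at h1
    rw [← hu'norm]
    exact h1
  have hm2 : (0:ℝ) < 1 - m^2 := by nlinarith
  rw [le_div_iff₀ hm2]
  have hd : 0 ≤ ‖deriv φ 1‖ := norm_nonneg _
  calc ‖deriv φ 1‖ * (1 - m^2) = (‖deriv φ 1‖ * ((1 - m^2)/m)) * m := by field_simp
    _ ≤ (1 - ‖b‖^2) * m := by nlinarith
    _ = m * (1 - ‖φ 1‖^2) := by rw [hbdef]; ring

/-- **Schwarz–Pick type bound for the Euler (radial) derivative on the polydisk.**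
If `f` is holomorphic on `𝔻ⁿ` with `|f| ≤ 1` there, then for every `z ∈ 𝔻ⁿ`,
`|Df(z)| ≤ n‖z‖_∞ (1 - |f(z)|²)/(1 - ‖z‖_∞²)`, where
`Df(z) = Σ_k z_k ∂f/∂z_k`. -/

theorem euler_derivative_bound_polydisk
    (n : ℕ) (hn : 1 ≤ n)
    (f : (Fin n → ℂ) → ℂ)
    (hf : DifferentiableOn ℂ f {w : Fin n → ℂ | ∀ j, ‖w j‖ < 1})
    (hb : ∀ w : Fin n → ℂ, (∀ j, ‖w j‖ < 1) → ‖f w‖ ≤ 1) :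
    ∀ z : Fin n → ℂ, (∀ j, ‖z j‖ < 1) →
      ‖∑ k : Fin n, z k * fderiv ℂ f z (Pi.single k 1)‖
        ≤ (n : ℝ) * ‖z‖ * (1 - ‖f z‖ ^ 2) / (1 - ‖z‖ ^ 2) := by
  intro z hz
  rcases eq_or_ne z 0 with rfl | hz0
  · simp
  have hm0 : 0 < ‖z‖ := norm_pos_iff.mpr hz0
  have hm1 : ‖z‖ < 1 := (pi_norm_lt_iff one_pos).mpr hz
  set m := ‖z‖ with hmdef
  have hopenP : IsOpen {w : Fin n → ℂ | ∀ j, ‖w j‖ < 1} := by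
    have he : {w : Fin n → ℂ | ∀ j, ‖w j‖ < 1} = Metric.ball 0 1 := by
      ext w
      rw [Set.mem_setOf_eq, Metric.mem_ball, dist_zero_right, pi_norm_lt_iff one_pos]
    rw [he]; exact isOpen_ball
  have hfz : DifferentiableAt ℂ f z := hf.differentiableAt (hopenP.mem_nhds hz)
  set S := ∑ k : Fin n, z k * fderiv ℂ f z (Pi.single k 1) with hSdef
  have hz_eq : z = ∑ k : Fin n, z k • (Pi.single k 1 : Fin n → ℂ) := by
    ext j
    simp [Finset.sum_apply, Pi.single_apply]
  have hS : fderiv ℂ f z z = S := by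
    rw [show (fderiv ℂ f z) z = (fderiv ℂ f z) (∑ k : Fin n, z k • (Pi.single k 1 : Fin n → ℂ))
      from congrArg _ hz_eq, map_sum]
    simp [hSdef, smul_eq_mul]
  have main : ∀ r : ℝ, r ∈ Set.Ioo (0:ℝ) 1 →
      r * ‖S‖ ≤ m * (1 - (r * ‖f z‖)^2) / (1 - m^2) := by
    rintro r ⟨hr0, hr1⟩
    set φ : ℂ → ℂ := fun lam => (r:ℂ) * f (lam • z) with hφdef
    have hrnorm : ‖((r:ℝ):ℂ)‖ = r := by
      rw [Complex.norm_real, Real.norm_of_nonneg hr0.le]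
    have hmem : ∀ lam : ℂ, lam ∈ ball (0:ℂ) (1/m) → (∀ j, ‖(lam • z) j‖ < 1) := by
      intro lam hlam j
      rw [mem_ball, dist_zero_right] at hlam
      have h1 : ‖(lam • z) j‖ = ‖lam‖ * ‖z j‖ := by
        simp [norm_smul]
      rw [h1]
      calc ‖lam‖ * ‖z j‖ ≤ ‖lam‖ * m := by
            exact mul_le_mul_of_nonneg_left (norm_le_pi_norm z j) (norm_nonneg _)
        _ < (1/m) * m := mul_lt_mul_of_pos_right hlam hm0
        _ = 1 := by field_simp
    have hφd : DifferentiableOn ℂ φ (ball 0 (1/m)) := by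
      intro lam hlam
      have h1 : DifferentiableAt ℂ (fun l : ℂ => l • z) lam :=
        (differentiable_id.smul_const z) lam
      have h2 : DifferentiableAt ℂ f (lam • z) :=
        hf.differentiableAt (hopenP.mem_nhds (hmem lam hlam))
      exact ((h2.comp lam h1).const_mul _).differentiableWithinAt
    have hφb : ∀ w ∈ ball (0:ℂ) (1/m), ‖φ w‖ < 1 := by
      intro w hw
      have h1 := hb _ (hmem w hw)
      have h2 : ‖φ w‖ = r * ‖f (w • z)‖ := by rw [hφdef, norm_mul, hrnorm]
      rw [h2]
      calc r * ‖f (w • z)‖ ≤ r * 1 := mul_le_mul_of_nonneg_left h1 hr0.le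
        _ < 1 := by linarith
    have key := schwarz_pick_key hm0 hm1 hφd hφb
    have hsz : HasDerivAt (fun l : ℂ => l • z) z 1 := by
      simpa using (hasDerivAt_id (1:ℂ)).smul_const z
    have hF : HasFDerivAt f (fderiv ℂ f z) ((1:ℂ) • z) := by
      rw [one_smul]; exact hfz.hasFDerivAt
    have hcomp : HasDerivAt (fun l : ℂ => f (l • z)) (fderiv ℂ f z z) 1 :=
      hF.comp_hasDerivAt 1 hsz
    have hφ1d : HasDerivAt φ ((r:ℂ) * fderiv ℂ f z z) 1 := hcomp.const_mul (r:ℂ)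
    have hd1 : ‖deriv φ 1‖ = r * ‖S‖ := by
      rw [hφ1d.deriv, norm_mul, hrnorm, hS]
    have hd2 : ‖φ 1‖ = r * ‖f z‖ := by
      rw [hφdef]
      simp only [one_smul]
      rw [norm_mul, hrnorm]
    rw [hd1, hd2] at key
    exact key
  have hm2 : (0:ℝ) < 1 - m^2 := by nlinarith
  have hlim1 : Tendsto (fun r : ℝ => r * ‖S‖) (nhdsWithin 1 (Set.Iio 1)) (nhds (1 * ‖S‖)) :=
    ((continuous_id.mul continuous_const).tendsto 1).mono_left nhdsWithin_le_nhds
  have hlim2 : Tendsto (fun r : ℝ => m * (1 - (r * ‖f z‖)^2) / (1 - m^2))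
      (nhdsWithin 1 (Set.Iio 1)) (nhds (m * (1 - (1 * ‖f z‖)^2) / (1 - m^2))) := by
    have hc : Continuous fun r : ℝ => m * (1 - (r * ‖f z‖)^2) / (1 - m^2) := by
      apply Continuous.div_const
      fun_prop
    exact (hc.tendsto 1).mono_left nhdsWithin_le_nhds
  have hfinal : 1 * ‖S‖ ≤ m * (1 - (1 * ‖f z‖)^2) / (1 - m^2) := by
    refine le_of_tendsto_of_tendsto hlim1 hlim2 ?_
    exact Filter.eventually_of_mem (Ioo_mem_nhdsLT one_pos)
      fun r hr => main r hr
  simp only [one_mul] at hfinal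
  refine hfinal.trans ?_
  have hA : 0 ≤ 1 - ‖f z‖^2 := by nlinarith [hb z hz, norm_nonneg (f z)]
  have hn' : (1:ℝ) ≤ n := by exact_mod_cast hn
  have hnum : m * (1 - ‖f z‖^2) ≤ (n:ℝ) * m * (1 - ‖f z‖^2) :=
    mul_le_mul_of_nonneg_right (le_mul_of_one_le_left hm0.le hn') hA
  exact (div_le_div_iff_of_pos_right hm2).mpr hnum
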